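/- Let μ ∈ K with μ ≠ 0. If u ∈ K⟨⟨e0,e1⟩⟩ commutes with exp(μe1) = Σ_{k≥0} μ^k e1^k / k!, then u[w] = 0 for every word w containing at least one letter e0; in other words, u is a power series in the single variable e1. -/

import Mathlib

/-! Infrastructure: noncommutative formal power series in two letters `e0, e1`,
their ring structure, exponential, inverse, substitution, shuffle products,
and the various words and submodules of coefficients used in the statements. -/

/-- Words over the alphabet `{e0, e1}`: lists over `Fin 2` (`0` is `e0`, `1` is `e1`),
read from left to right. -/
abbrev Word : Type := List (Fin 2)

/-- The depth of a word: its number of letters `e1`. -/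
def depth (w : Word) : ℕ := w.count 1

/-- Noncommutative formal power series in `e0, e1` over `K`, encoded by their
coefficient functions on words. -/
def NCS (K : Type*) : Type _ := Word → K

namespace NCS

variable {K : Type*} [CommRing K]

instance : AddCommGroup (NCS K) := Pi.addCommGroup
instance : SMul K (NCS K) := ⟨fun c f => fun w => c * f w⟩
instance : One (NCS K) := ⟨fun w => if w = [] then 1 else 0⟩
/-- Multiplication of noncommutative power series (Cauchy product on words). -/
instance : Mul (NCS K) := ⟨fun f g => fun w =>
  ∑ i ∈ Finset.range (w.length + 1), f (w.take i) * g (w.drop i)⟩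

lemma mul_apply (f g : NCS K) (w : Word) :
    (f * g) w = ∑ i ∈ Finset.range (w.length + 1), f (w.take i) * g (w.drop i) := rfl

lemma add_apply (f g : NCS K) (w : Word) : (f + g) w = f w + g w := rfl

lemma smul_apply (c : K) (f : NCS K) (w : Word) : (c • f) w = c * f w := rfl

lemma zero_apply (w : Word) : (0 : NCS K) w = 0 := rfl

lemma one_apply (w : Word) : (1 : NCS K) w = if w = [] then 1 else 0 := rfl

/-- Left shift of the coefficient function by a letter. -/
def shift (a : Fin 2) (f : NCS K) : NCS K := fun w => f (a :: w)

lemma mul_nil (f g : NCS K) : (f * g) [] = f [] * g [] := by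
  simp [mul_apply]

lemma cons_mul (f g : NCS K) (a : Fin 2) (w : Word) :
    (f * g) (a :: w) = f [] * g (a :: w) + (shift a f * g) w := by
  show (∑ i ∈ Finset.range (w.length + 1 + 1), f ((a :: w).take i) * g ((a :: w).drop i)) = _
  rw [Finset.sum_range_succ']
  simp only [List.take_succ_cons, List.drop_succ_cons, List.take_zero, List.drop_zero]
  rw [add_comm]
  rfl

private lemma zero_mul' (f : NCS K) : 0 * f = 0 := by
  funext w; simp [mul_apply, zero_apply]

private lemma mul_zero' (f : NCS K) : f * 0 = 0 := by
  funext w; simp [mul_apply, zero_apply]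

private lemma add_mul' (f g h : NCS K) : (f + g) * h = f * h + g * h := by
  funext w
  simp [mul_apply, add_apply, add_mul, Finset.sum_add_distrib]

private lemma mul_add' (f g h : NCS K) : f * (g + h) = f * g + f * h := by
  funext w
  simp [mul_apply, add_apply, mul_add, Finset.sum_add_distrib]

private lemma smul_mul' (c : K) (f g : NCS K) : (c • f) * g = c • (f * g) := by
  funext w
  simp [mul_apply, smul_apply, Finset.mul_sum, mul_assoc]

private lemma one_mul' (f : NCS K) : 1 * f = f := by
  funext w
  cases w with
  | nil => simp [mul_nil, one_apply]
  | cons a w =>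
      have : shift a (1 : NCS K) = 0 := by
        funext v; show (if (a :: v : Word) = [] then (1:K) else 0) = 0; simp
      rw [cons_mul, this, zero_mul', zero_apply, one_apply]
      simp

private lemma mul_one' (f : NCS K) : f * 1 = f := by
  funext w
  induction w generalizing f with
  | nil => simp [mul_nil, one_apply]
  | cons a w ih =>
      rw [cons_mul, one_apply, ih]
      simp [shift]

private lemma mul_assoc' (f g h : NCS K) : f * g * h = f * (g * h) := by
  funext w
  induction w generalizing f g h with
  | nil =>
      simp only [mul_nil]
      ring
  | cons a w ih =>
      have h1 : shift a (f * g) = f [] • shift a g + shift a f * g := by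
        funext v
        show (f * g) (a :: v) = _
        rw [cons_mul]
        rfl
      have e1 : (f * g * h) (a :: w)
          = f [] * g [] * h (a :: w)
            + (f [] * ((shift a g * h) w) + ((shift a f * g) * h) w) := by
        rw [cons_mul, h1, add_mul', smul_mul', mul_nil, add_apply, smul_apply]
      have e2 : (f * (g * h)) (a :: w)
          = f [] * (g [] * h (a :: w) + (shift a g * h) w)
            + (shift a f * (g * h)) w := by
        rw [cons_mul, cons_mul]
      rw [e1, e2, ih]
      ring

instance instRing : Ring (NCS K) where
  __ := (inferInstance : AddCommGroup (NCS K))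
  __ := (inferInstance : Mul (NCS K))
  __ := (inferInstance : One (NCS K))
  left_distrib := mul_add'
  right_distrib := add_mul'
  zero_mul := zero_mul'
  mul_zero := mul_zero'
  mul_assoc := mul_assoc'
  one_mul := one_mul'
  mul_one := mul_one'

/-- The inverse of a noncommutative power series, given by the geometric series
`Σ_k (1-f)^k`.  For `f` with constant coefficient `1` (the only case used) this is
the genuine two-sided multiplicative inverse of `f`. -/
instance : Inv (NCS K) :=
  ⟨fun f => fun w => ∑ k ∈ Finset.range (w.length + 1), ((1 - f) ^ k) w⟩

/-- The series `e0`. -/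
def E0 : NCS K := fun w => if w = [0] then 1 else 0

/-- The series `e1`. -/
def E1 : NCS K := fun w => if w = [1] then 1 else 0

/-- The series `e∞ = -e0 - e1`. -/
def Einf : NCS K := -E0 - E1

/-- The finite set of all words of length at most `n`. -/
def wordsLe (n : ℕ) : Finset Word :=
  (Finset.range (n + 1)).biUnion fun k =>
    Finset.image (fun t : Fin k → Fin 2 => List.ofFn t) Finset.univ

/-- The product of the letters of `w` after the substitution `e0 ↦ a`, `e1 ↦ b`. -/
def prodWord (a b : NCS K) (w : Word) : NCS K :=
  (w.map fun c => if c = 0 then a else b).prod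

/-- Substitution `f(e0,e1) ↦ f(a,b)`: the image of `f` under the continuous algebra
endomorphism determined by `e0 ↦ a`, `e1 ↦ b` (for `a`, `b` with zero constant term). -/
def subst (a b : NCS K) (f : NCS K) : NCS K :=
  fun v => ∑ w ∈ wordsLe v.length, f w * prodWord a b w v

/-- The exponential series `exp a = Σ_k a^k/k!` (for `a` with zero constant term). -/
def expS {K : Type*} [Field K] (a : NCS K) : NCS K :=
  fun w => ∑ k ∈ Finset.range (w.length + 1), (Nat.factorial k : K)⁻¹ * (a ^ k) w

end NCS

/-- The list of all shuffles of two words. -/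
def shuffle : Word → Word → List Word
  | [], v => [v]
  | a :: u, [] => [a :: u]
  | a :: u, b :: v =>
      ((shuffle u (b :: v)).map fun w => a :: w) ++ ((shuffle (a :: u) v).map fun w => b :: w)
termination_by u v => u.length + v.length

namespace NCS

variable {K : Type*} [CommRing K]

/-- `f[u ⧢ v]`: the coefficient function `f` applied linearly to the shuffle `u ⧢ v`. -/
def shufApply (f : NCS K) (u v : Word) : K := ((shuffle u v).map fun w => f w).sum

/-- `f ∈ Π(K)`: group-like elements, i.e. solutions of the shuffle equations with
constant coefficient `1`. -/
def IsPi (f : NCS K) : Prop :=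
  f [] = 1 ∧ ∀ u v : Word, shufApply f u v = f u * f v

/-- `f ∈ Π̃(K)`: elements of `Π(K)` whose weight-one coefficients vanish. -/
def IsPiT (f : NCS K) : Prop := IsPi f ∧ f [0] = 0 ∧ f [1] = 0

end NCS

/-- The block `e0^{k-1} e1`. -/
def blk (k : ℕ) : Word := List.replicate (k - 1) 0 ++ [1]

/-- The word `e0^{s_d-1} e1 e0^{s_{d-1}-1} e1 ⋯ e0^{s_1-1} e1` (only the values
`s 1, …, s d` matter). -/
def wordW (d : ℕ) (s : ℕ → ℕ) : Word :=
  (List.ofFn fun j : Fin d => blk (s (d - (j : ℕ)))).flatten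

/-- The word `e0^{s_d-1} e1 ⋯ e0^{s_1-1} e1 e0^{s_0-1}`. -/
def word1 (d : ℕ) (s : ℕ → ℕ) : Word :=
  wordW d s ++ List.replicate (s 0 - 1) 0

/-- The word `W(a_d; a_{d-1}, …, a_1; a_0) = e0^{a_d} e1 e0^{a_{d-1}} e1 ⋯ e1 e0^{a_1} e1 e0^{a_0}`
of depth `d`. -/
def wordA (d : ℕ) (a : ℕ → ℕ) : Word :=
  List.replicate (a d) 0 ++
    (List.ofFn fun j : Fin d => (1 : Fin 2) :: List.replicate (a (d - 1 - (j : ℕ))) 0).flatten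

/-- `binom (−s, l) = (−1)^l · binom (s+l−1, l)`. -/
def nbinom (s l : ℕ) : ℤ := (-1) ^ l * ((s + l - 1).choose l)

/-- Extension of a tuple `t : Fin d → ℕ` to `ℕ → ℕ` so that index `i ∈ {1, …, d}`
reads `t (i-1)` and all other indices read `0`. -/
def extFin (d : ℕ) (t : Fin d → ℕ) : ℕ → ℕ :=
  fun i => if h : i - 1 < d ∧ 1 ≤ i then t ⟨i - 1, h.1⟩ else 0

namespace NCS

/-- The filtration `Fil_s(C_μ) = Σ_{s1+s2=s} (1/s1!)·ℤ·(μ/2)^{s2}` of `ℚ ⊆ K`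
(`μ ≠ 0` case; for `μ = 0` it reduces to `ℤ ⊆ K`). -/
def Fil {K : Type*} [Field K] (μ : K) (s : ℕ) : Submodule ℤ K :=
  Submodule.span ℤ
    {x : K | ∃ s1 s2 : ℕ, s1 + s2 = s ∧ x = (Nat.factorial s1 : K)⁻¹ * (μ / 2) ^ s2}

variable {K : Type*} [CommRing K]

/-- `M_D(f)`: the ℤ-submodule of `K` generated by the products `f[w_1]⋯f[w_k]`, `k ≥ 1`,
where each `w_j` is a word of depth between `1` and `D`. -/
def Msub (D : ℕ) (f : NCS K) : Submodule ℤ K :=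
  Submodule.span ℤ
    {x : K | ∃ l : List Word, l ≠ [] ∧ (∀ w ∈ l, 1 ≤ depth w ∧ depth w ≤ D) ∧
      x = (l.map fun w => f w).prod}

/-- `M^μ_D(f)`: as `Msub` but with coefficients in the filtration `Fil`. -/
def MsubFil {K : Type*} [Field K] (μ : K) (D : ℕ) (f : NCS K) : Submodule ℤ K :=
  Submodule.span ℤ
    {x : K | ∃ (l : List Word) (c : K), l ≠ [] ∧
      (∀ w ∈ l, 1 ≤ depth w ∧ depth w ≤ D) ∧
      c ∈ Fil μ ((l.map List.length).sum) ∧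
      x = c * (l.map fun w => f w).prod}

/-- The one-dimensional associator equations with `μ = 0`: duality (2-cycle), 3-cycle,
and the special automorphism equation. -/
def OneDim0 (Φ : NCS K) : Prop :=
  Φ * subst E1 E0 Φ = 1 ∧
  subst Einf E0 Φ * subst E1 Einf Φ * Φ = 1 ∧
  E0 + Φ⁻¹ * E1 * Φ + (subst E0 Einf Φ)⁻¹ * Einf * subst E0 Einf Φ = 0

/-- The one-dimensional associator equations with coupling constant `μ ≠ 0`: duality,
hexagon, and the equation of special automorphisms. -/
def OneDimMu {K : Type*} [Field K] (μ : K) (Φ : NCS K) : Prop :=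
  subst E1 E0 Φ = Φ⁻¹ ∧
  expS ((μ / 2) • E0) * subst Einf E0 Φ * expS ((μ / 2) • Einf) *
      subst E1 Einf Φ * expS ((μ / 2) • E1) * Φ = 1 ∧
  Φ⁻¹ * expS ((-μ) • E1) * Φ * expS ((-μ) • E0) =
    expS ((μ / 2) • E0) * (subst E0 Einf Φ)⁻¹ * expS (μ • Einf) *
      subst E0 Einf Φ * expS ((-(μ / 2)) • E0)

end NCS

section Stmt4Aux
open NCS

variable {K : Type*} [Field K]

private lemma ncs_smul_mul_apply (c : K) (f g : NCS K) (w : Word) :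
    ((c • f) * g) w = c * (f * g) w := by
  simp [NCS.mul_apply, NCS.smul_apply, Finset.mul_sum, mul_assoc]

private lemma smulE1_mul_nil (μ : K) (f : NCS K) : ((μ • E1 : NCS K) * f) [] = 0 := by
  rw [NCS.mul_nil]
  simp [NCS.smul_apply, NCS.E1]

private lemma smulE1_mul_cons (μ : K) (f : NCS K) (a : Fin 2) (w : Word) :
    ((μ • E1 : NCS K) * f) (a :: w) = if a = 1 then μ * f w else 0 := by
  rw [NCS.cons_mul]
  have h0 : (μ • E1 : NCS K) [] = 0 := by simp [NCS.smul_apply, NCS.E1]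
  rw [h0, zero_mul, zero_add]
  have hs : NCS.shift a (μ • E1 : NCS K) = if a = 1 then μ • (1 : NCS K) else 0 := by
    funext v
    fin_cases a <;> by_cases hv : v = [] <;>
      simp_all [NCS.shift, NCS.smul_apply, NCS.E1, NCS.one_apply, NCS.zero_apply]
  rw [hs]
  by_cases ha : a = 1
  · rw [if_pos ha, if_pos ha, ncs_smul_mul_apply, one_mul]
  · rw [if_neg ha, if_neg ha, zero_mul]
    rfl

private lemma smulE1_pow (μ : K) : ∀ (k : ℕ) (w : Word),
    ((μ • E1 : NCS K) ^ k) w = if w = List.replicate k 1 then μ ^ k else 0 := by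
  intro k
  induction k with
  | zero => intro w; simp [NCS.one_apply]
  | succ k ih =>
    intro w
    rw [pow_succ']
    cases w with
    | nil => rw [smulE1_mul_nil]; simp [List.replicate_succ]
    | cons a w =>
      rw [smulE1_mul_cons, ih]
      fin_cases a
      · simp [List.replicate_succ]
      · by_cases hw : w = List.replicate k 1 <;>
          simp [List.replicate_succ, hw, pow_succ, mul_comm]

private lemma expS_smulE1_apply (μ : K) (v : Word) :
    expS (μ • E1 : NCS K) v =
      if v = List.replicate v.length 1 then (Nat.factorial v.length : K)⁻¹ * μ ^ v.length
      else 0 := by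
  show (∑ k ∈ Finset.range (v.length + 1), (Nat.factorial k : K)⁻¹ * ((μ • E1 : NCS K) ^ k) v) = _
  by_cases hv : v = List.replicate v.length 1
  · rw [if_pos hv, Finset.sum_eq_single_of_mem v.length (Finset.self_mem_range_succ v.length)]
    · rw [smulE1_pow, if_pos hv]
    · intro k _ hk
      rw [smulE1_pow, if_neg, mul_zero]
      intro hvk
      have hl : v.length = k := by simpa using congrArg List.length hvk
      exact hk hl.symm
  · rw [if_neg hv]
    refine Finset.sum_eq_zero fun k _ => ?_
    rw [smulE1_pow, if_neg, mul_zero]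
    intro hvk
    apply hv
    have hl : v.length = k := by simpa using congrArg List.length hvk
    rw [hl]; exact hvk

private lemma expS_smulE1_zero {μ : K} {v : Word} (hv : (0 : Fin 2) ∈ v) :
    expS (μ • E1 : NCS K) v = 0 := by
  rw [expS_smulE1_apply, if_neg]
  intro hv'
  rw [hv'] at hv
  exact absurd (List.eq_of_mem_replicate hv) (by decide)

private lemma expS_smulE1_ones (μ : K) (n : ℕ) :
    expS (μ • E1 : NCS K) (List.replicate n 1) = (Nat.factorial n : K)⁻¹ * μ ^ n := by
  rw [expS_smulE1_apply]
  simp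

/-- The word `1^a ++ m ++ 1^b`. -/
private def Wd (m : Word) (a b : ℕ) : Word :=
  List.replicate a 1 ++ m ++ List.replicate b 1

private lemma lhs_eval (μ : K) (u : NCS K) (m p : Word) (hp : m = p ++ [0]) (a b : ℕ) :
    (u * expS (μ • E1 : NCS K)) (Wd m a b)
      = ∑ t ∈ Finset.range (b + 1),
          u (Wd m a t) * ((Nat.factorial (b - t) : K)⁻¹ * μ ^ (b - t)) := by
  rw [NCS.mul_apply]
  have hlen : (Wd m a b).length + 1 = (a + m.length) + (b + 1) := by
    simp only [Wd, List.length_append, List.length_replicate]; omega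
  rw [hlen, Finset.sum_range_add]
  have h1 : ∑ i ∈ Finset.range (a + m.length),
      u ((Wd m a b).take i) * expS (μ • E1) ((Wd m a b).drop i) = 0 := by
    refine Finset.sum_eq_zero fun i hi => ?_
    rw [Finset.mem_range] at hi
    have hmem : (0 : Fin 2) ∈ (Wd m a b).drop i := by
      have hW : Wd m a b = (List.replicate a 1 ++ p) ++ (0 :: List.replicate b 1) := by
        simp [Wd, hp]
      rw [hW, List.drop_append]
      have e : i - (List.replicate a 1 ++ p : Word).length = 0 := by
        have : p.length + 1 = m.length := by rw [hp]; simp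
        simp only [List.length_append, List.length_replicate]
        omega
      rw [e]
      simp
    rw [expS_smulE1_zero hmem, mul_zero]
  rw [h1, zero_add]
  refine Finset.sum_congr rfl fun t ht => ?_
  rw [Finset.mem_range] at ht
  have hW : Wd m a b = (List.replicate a 1 ++ m) ++ List.replicate b 1 := by
    simp [Wd]
  have hdrop : (Wd m a b).drop (a + m.length + t) = List.replicate (b - t) 1 := by
    rw [hW, List.drop_append]
    have e1 : (List.replicate a 1 ++ m : Word).drop (a + m.length + t) = [] :=
      List.drop_eq_nil_of_le (by simp)
    have e2 : a + m.length + t - (List.replicate a 1 ++ m : Word).length = t := by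
      simp
    rw [e1, e2, List.drop_replicate, List.nil_append]
  have htake : (Wd m a b).take (a + m.length + t) = Wd m a t := by
    rw [hW, List.take_append]
    have e1 : (List.replicate a 1 ++ m : Word).take (a + m.length + t)
        = List.replicate a 1 ++ m :=
      List.take_of_length_le (by simp)
    have e2 : a + m.length + t - (List.replicate a 1 ++ m : Word).length = t := by
      simp
    rw [e1, e2, List.take_replicate]
    have : t ⊓ b = t := min_eq_left (by omega)
    rw [this]
    simp [Wd]
  rw [htake, hdrop, expS_smulE1_ones]

private lemma rhs_eval (μ : K) (u : NCS K) (m t0 : Word) (ht : m = 0 :: t0) (a b : ℕ) :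
    (expS (μ • E1 : NCS K) * u) (Wd m a b)
      = ∑ i ∈ Finset.range (a + 1),
          (Nat.factorial i : K)⁻¹ * μ ^ i * u (Wd m (a - i) b) := by
  rw [NCS.mul_apply]
  have hlen : (Wd m a b).length + 1 = (a + 1) + (m.length + b) := by
    simp only [Wd, List.length_append, List.length_replicate]; omega
  rw [hlen, Finset.sum_range_add]
  have h2 : ∑ j ∈ Finset.range (m.length + b),
      expS (μ • E1) ((Wd m a b).take (a + 1 + j)) * u ((Wd m a b).drop (a + 1 + j)) = 0 := by
    refine Finset.sum_eq_zero fun j _ => ?_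
    have hmem : (0 : Fin 2) ∈ (Wd m a b).take (a + 1 + j) := by
      have hW : Wd m a b = List.replicate a 1 ++ (0 :: (t0 ++ List.replicate b 1)) := by
        simp [Wd, ht]
      rw [hW, List.take_append]
      have e : a + 1 + j - (List.replicate a 1 : Word).length = j + 1 := by
        simp only [List.length_replicate]; omega
      rw [e, List.take_succ_cons]
      exact List.mem_append_right _ List.mem_cons_self
    rw [expS_smulE1_zero hmem, zero_mul]
  rw [h2, add_zero]
  refine Finset.sum_congr rfl fun i hi => ?_
  rw [Finset.mem_range] at hi
  have hW : Wd m a b = List.replicate a 1 ++ (m ++ List.replicate b 1) := by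
    simp [Wd]
  have htake : (Wd m a b).take i = List.replicate i 1 := by
    rw [hW, List.take_append]
    have e : i - (List.replicate a 1 : Word).length = 0 := by
      simp only [List.length_replicate]; omega
    rw [e, List.take_replicate]
    have : i ⊓ a = i := min_eq_left (by omega)
    rw [this]
    simp
  have hdrop : (Wd m a b).drop i = Wd m (a - i) b := by
    rw [hW, List.drop_append]
    have e : i - (List.replicate a 1 : Word).length = 0 := by
      simp only [List.length_replicate]; omega
    rw [e, List.drop_replicate, List.drop_zero]
    simp [Wd]
  rw [htake, hdrop, expS_smulE1_ones]

private lemma main_vanish (μ : K) (hμ : μ ≠ 0) (u : NCS K)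
    (h : u * expS (μ • E1) = expS (μ • E1) * u)
    (m p t0 : Word) (hp : m = p ++ [0]) (ht : m = 0 :: t0) :
    ∀ b a, u (Wd m a b) = 0 := by
  intro b
  induction b using Nat.strong_induction_on with
  | _ b ihb =>
  intro a
  induction a using Nat.strong_induction_on with
  | _ a iha =>
  have R := congrFun h (Wd m (a + 1) b)
  rw [lhs_eval μ u m p hp, rhs_eval μ u m t0 ht] at R
  have hLHS : ∑ t ∈ Finset.range (b + 1),
      u (Wd m (a + 1) t) * ((Nat.factorial (b - t) : K)⁻¹ * μ ^ (b - t))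
      = u (Wd m (a + 1) b) := by
    rw [Finset.sum_eq_single_of_mem b (Finset.self_mem_range_succ b)
      (fun t htm htb => by
        rw [Finset.mem_range] at htm
        rw [ihb t (by omega) (a + 1), zero_mul])]
    simp
  have hRHS : ∑ i ∈ Finset.range (a + 1 + 1),
      (Nat.factorial i : K)⁻¹ * μ ^ i * u (Wd m (a + 1 - i) b)
      = μ * u (Wd m a b) + u (Wd m (a + 1) b) := by
    rw [Finset.sum_range_succ']
    have h1 : ∑ i ∈ Finset.range (a + 1),
        (Nat.factorial (i + 1) : K)⁻¹ * μ ^ (i + 1) * u (Wd m (a + 1 - (i + 1)) b)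
        = μ * u (Wd m a b) := by
      rw [Finset.sum_eq_single_of_mem 0 (Finset.mem_range.mpr (Nat.succ_pos a))
        (fun i him hi0 => by
          rw [Finset.mem_range] at him
          have e : a + 1 - (i + 1) = a - i := by omega
          rw [e, iha (a - i) (by omega), mul_zero])]
      norm_num [Nat.factorial]
    rw [h1]
    norm_num [Nat.factorial]
  rw [hLHS, hRHS] at R
  have hz : μ * u (Wd m a b) = 0 := by linear_combination -R
  exact (mul_eq_zero.mp hz).resolve_left hμ

private lemma decompA : ∀ w : Word, (0 : Fin 2) ∈ w →
    ∃ a v, w = List.replicate a 1 ++ (0 :: v) := by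
  intro w
  induction w with
  | nil => intro hw; simp at hw
  | cons x w ih =>
    intro hw
    by_cases hx : x = 0
    · exact ⟨0, w, by rw [hx]; rfl⟩
    · have hx1 : x = 1 := by omega
      have hw' : (0 : Fin 2) ∈ w := by
        rcases List.mem_cons.mp hw with h0 | h0
        · exact absurd h0.symm hx
        · exact h0
      obtain ⟨a, v, rfl⟩ := ih hw'
      exact ⟨a + 1, v, by rw [hx1, List.replicate_succ]; rfl⟩

private lemma decompB : ∀ v : Word,
    ∃ b r, v = r ++ List.replicate b 1 ∧ (r = [] ∨ r.getLast? = some 0) := by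
  intro v
  induction v with
  | nil => exact ⟨0, [], by simp, Or.inl rfl⟩
  | cons x w ih =>
    obtain ⟨b, r, hw, hr⟩ := ih
    by_cases hx : x = 0
    · refine ⟨b, x :: r, by simp [hw], Or.inr ?_⟩
      rcases hr with rfl | hr
      · rw [hx]; rfl
      · cases r with
        | nil => simp at hr
        | cons y r' => rw [List.getLast?_cons_cons]; exact hr
    · have hx1 : x = 1 := by omega
      rcases hr with rfl | hr
      · exact ⟨b + 1, [], by rw [hx1, hw, List.replicate_succ]; rfl, Or.inl rfl⟩
      · refine ⟨b, x :: r, by simp [hw], Or.inr ?_⟩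
        cases r with
        | nil => simp at hr
        | cons y r' => rw [List.getLast?_cons_cons]; exact hr

end Stmt4Aux

open NCS in
/-- a series commuting with `exp (μ e1)`, `μ ≠ 0`, has no coefficient on
words containing the letter `e0`, i.e. it is a power series in `e1` alone. -/
theorem stmt_4 {K : Type*} [Field K] [CharZero K] (μ : K) (hμ : μ ≠ 0)
    (u : NCS K) (h : u * expS (μ • E1) = expS (μ • E1) * u) :
    ∀ w : Word, (0 : Fin 2) ∈ w → u w = 0 := by
  intro w hw
  obtain ⟨a, v, rfl⟩ := decompA w hw
  obtain ⟨b, r, hv, hr⟩ := decompB v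
  have hw' : List.replicate a 1 ++ (0 :: v) = Wd (0 :: r) a b := by
    simp [Wd, hv]
  rw [hw']
  have hp : ∃ p, (0 :: r : Word) = p ++ [0] := by
    rcases hr with rfl | hr
    · exact ⟨[], rfl⟩
    · obtain ⟨p', rfl⟩ := List.getLast?_eq_some_iff.mp hr
      exact ⟨0 :: p', by simp⟩
  obtain ⟨p, hp⟩ := hp
  exact main_vanish μ hμ u h (0 :: r) p r hp rfl b a
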